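/- The function g(z) = ln(log₂(1+e^z)) is strictly concave on (-∞, 0); equivalently, its second derivative is negative for all z < 0 (the second derivative is a positive multiple of ln(1+e^z) − 1, which is negative for z < 0). -/

import Mathlib

theorem stmt2 (g : ℝ → ℝ) (hg : g = fun z => Real.log (Real.logb 2 (1 + Real.exp z))) :
    StrictConcaveOn ℝ (Set.Iio (0 : ℝ)) g ∧
    ∀ z : ℝ, z < 0 → iteratedDeriv 2 g z < 0 := by
  have hu : ∀ z : ℝ, (1:ℝ) < 1 + Real.exp z := fun z => lt_add_of_pos_right 1 (Real.exp_pos z)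
  have hL : ∀ z : ℝ, 0 < Real.log (1 + Real.exp z) := fun z => Real.log_pos (hu z)
  have hg' : g = fun z => Real.log (Real.log (1 + Real.exp z)) - Real.log (Real.log 2) := by
    funext z
    simp only [hg, Real.logb]
    rw [Real.log_div (ne_of_gt (hL z)) (ne_of_gt (Real.log_pos one_lt_two))]
  have hd1 : ∀ z, HasDerivAt g
      (Real.exp z / ((1 + Real.exp z) * Real.log (1 + Real.exp z))) z := by
    intro z
    rw [hg']
    have h1 : HasDerivAt (fun z => 1 + Real.exp z) (Real.exp z) z :=
      (Real.hasDerivAt_exp z).const_add 1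
    have h2 := h1.log (by positivity)
    have h3 := (h2.log (ne_of_gt (hL z))).sub_const (Real.log (Real.log 2))
    exact h3.congr_deriv (by rw [div_div])
  have hderiv : deriv g = fun z => Real.exp z / ((1 + Real.exp z) * Real.log (1 + Real.exp z)) :=
    funext fun z => (hd1 z).deriv
  have key : ∀ z : ℝ, deriv (deriv g) z < 0 := by
    intro z
    have h1 : HasDerivAt (fun z => 1 + Real.exp z) (Real.exp z) z :=
      (Real.hasDerivAt_exp z).const_add 1
    have h2 : HasDerivAt (fun z => Real.log (1 + Real.exp z))
        (Real.exp z / (1 + Real.exp z)) z := h1.log (by positivity)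
    have hden : HasDerivAt (fun z => (1 + Real.exp z) * Real.log (1 + Real.exp z))
        (Real.exp z * Real.log (1 + Real.exp z) +
          (1 + Real.exp z) * (Real.exp z / (1 + Real.exp z))) z := h1.mul h2
    have hdpos : 0 < (1 + Real.exp z) * Real.log (1 + Real.exp z) :=
      mul_pos (by positivity) (hL z)
    have hdiv := (Real.hasDerivAt_exp z).div hden (ne_of_gt hdpos)
    have hE : deriv (deriv g) z =
        (Real.exp z * ((1 + Real.exp z) * Real.log (1 + Real.exp z)) -
          Real.exp z * (Real.exp z * Real.log (1 + Real.exp z) +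
            (1 + Real.exp z) * (Real.exp z / (1 + Real.exp z)))) /
          ((1 + Real.exp z) * Real.log (1 + Real.exp z)) ^ 2 := by
      rw [hderiv]; exact hdiv.deriv
    have hcancel : (1 + Real.exp z) * (Real.exp z / (1 + Real.exp z)) = Real.exp z := by
      field_simp
    have hLe : Real.log (1 + Real.exp z) < Real.exp z := by
      have := Real.log_lt_sub_one_of_pos (by positivity : (0:ℝ) < 1 + Real.exp z)
        (ne_of_gt (hu z))
      linarith
    rw [hE, hcancel]
    apply div_neg_of_neg_of_pos
    · nlinarith [mul_lt_mul_of_pos_left hLe (Real.exp_pos z)]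
    · exact pow_pos hdpos 2
  constructor
  · apply strictConcaveOn_of_deriv2_neg (convex_Iio 0)
    · have : Differentiable ℝ g := fun z => (hd1 z).differentiableAt
      exact this.continuous.continuousOn
    · intro z hz
      simpa [Function.iterate_succ, Function.iterate_zero] using key z
  · intro z hz
    simpa [iteratedDeriv_succ, iteratedDeriv_zero] using key z
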